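/- arXiv:1906.08540 — 2 statements merged into one kernel-verified Lean document; each statement's English description precedes it below -/
import Mathlib

section
/- Values of the screened marginals and complement mass bound: The screened optimal solution satisfies μ^sc_i = κ μ_i for every i ∈ I, and Σ_{i ∉ I} μ^sc_i = Σ_{i ∉ I} (ε/κ) Σ_{j=1}^m K_{ij} e^{v^sc_j} ≤ (n − n_b)·( m_b·(max_{j∈J} ν_j)/(n κ K_min) + (m − m_b)·ε² ). -/
open scoped Classical

set_option maxHeartbeats 1000000

lemma stationary_aux {a b δ : ℝ} (ha : 0 < a) (hb : 0 < b) (hδ : 0 < δ)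
    (h : ∀ t : ℝ, -δ ≤ t → a ≤ a * Real.exp t - b * t) : a = b := by
  by_contra hne
  rcases lt_or_gt_of_ne hne with hab | hab
  · set t := Real.log (b / a) / 2 with ht
    have hba : 1 < b / a := (one_lt_div ha).mpr hab
    have hlog : 0 < Real.log (b / a) := Real.log_pos hba
    have htpos : 0 < t := by positivity
    have hlt : a * Real.exp t < b := by
      have h1 : Real.exp t < b / a := by
        rw [show b / a = Real.exp (Real.log (b / a)) from (Real.exp_log (by positivity)).symm]
        exact Real.exp_lt_exp.mpr (by linarith)
      calc a * Real.exp t < a * (b / a) := by nlinarith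
        _ = b := by field_simp
    have hexp : Real.exp t - 1 ≤ t * Real.exp t := by
      have h2 := Real.add_one_le_exp (-t)
      have h3 := mul_le_mul_of_nonneg_right h2 (Real.exp_pos t).le
      rw [← Real.exp_add] at h3
      simp at h3
      nlinarith [Real.exp_pos t]
    have hmin := h t (by linarith)
    nlinarith [mul_le_mul_of_nonneg_left hexp ha.le, mul_lt_mul_of_pos_left hlt htpos]
  · have hab1 : 1 < a / b := (one_lt_div hb).mpr hab
    have hlog : 0 < Real.log (a / b) := Real.log_pos hab1
    set s := min δ (Real.log (a / b) / 2) with hs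
    have hspos : 0 < s := lt_min hδ (by positivity)
    have hgt : b < a * Real.exp (-s) := by
      have h1 : Real.exp (-Real.log (a / b)) < Real.exp (-s) := by
        apply Real.exp_lt_exp.mpr
        have : s ≤ Real.log (a / b) / 2 := min_le_right _ _
        linarith
      rw [Real.exp_neg, Real.exp_log (by positivity)] at h1
      have : b / a < Real.exp (-s) := by
        rw [show ((a/b):ℝ)⁻¹ = b / a by field_simp] at h1; exact h1
      calc b = a * (b / a) := by field_simp
        _ < a * Real.exp (-s) := by nlinarith
    have hexp2 : s * Real.exp (-s) ≤ 1 - Real.exp (-s) := by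
      have h2 := Real.add_one_le_exp s
      have h3 := mul_le_mul_of_nonneg_right h2 (Real.exp_pos (-s)).le
      rw [← Real.exp_add] at h3
      simp at h3
      nlinarith [Real.exp_pos (-s)]
    have hmin := h (-s) (by simp [neg_le_neg_iff]; exact min_le_left _ _)
    nlinarith [mul_le_mul_of_nonneg_left hexp2 ha.le, mul_lt_mul_of_pos_left hgt hspos]

theorem screened_marginal_values_and_complement_mass
    (n m : ℕ) (hn : 0 < n) (hm : 0 < m)
    (C : Fin n → Fin m → ℝ) (hC : ∀ i j, 0 ≤ C i j)
    (η : ℝ) (hη : 0 < η)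
    (K : Fin n → Fin m → ℝ) (hK : ∀ i j, K i j = Real.exp (-(C i j) / η))
    (μ : Fin n → ℝ) (ν : Fin m → ℝ)
    (hμpos : ∀ i, 0 < μ i) (hνpos : ∀ j, 0 < ν j)
    (hμsum : ∑ i, μ i = 1) (hνsum : ∑ j, ν j = 1)
    (ε κ : ℝ) (hε : 0 < ε) (hκ : 0 < κ)
    (I : Finset (Fin n)) (hI : ∀ i, i ∈ I ↔ ε ^ 2 / κ * (∑ j, K i j) ≤ μ i)
    (J : Finset (Fin m)) (hJ : ∀ j, j ∈ J ↔ κ * ε ^ 2 * (∑ i, K i j) ≤ ν j)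
    (hIne : I.Nonempty) (hJne : J.Nonempty)
    (Kmin : ℝ) (hKmin_le : ∀ i j, Kmin ≤ K i j) (hKmin_mem : ∃ i j, K i j = Kmin)
    (usc : Fin n → ℝ) (vsc : Fin m → ℝ)
    (husc_feas : ∀ i, ε / κ ≤ Real.exp (usc i))
    (hvsc_feas : ∀ j, ε * κ ≤ Real.exp (vsc j))
    (husc_out : ∀ i ∉ I, usc i = Real.log (ε / κ))
    (hvsc_out : ∀ j ∉ J, vsc j = Real.log (ε * κ))
    (hsc_min : ∀ (u : Fin n → ℝ) (v : Fin m → ℝ),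
      (∀ i, ε / κ ≤ Real.exp (u i)) → (∀ j, ε * κ ≤ Real.exp (v j)) →
      (∀ i ∉ I, u i = Real.log (ε / κ)) → (∀ j ∉ J, v j = Real.log (ε * κ)) →
      (∑ i, ∑ j, Real.exp (usc i) * K i j * Real.exp (vsc j))
          - κ * (∑ i, usc i * μ i) - (1 / κ) * (∑ j, vsc j * ν j)
        ≤ (∑ i, ∑ j, Real.exp (u i) * K i j * Real.exp (v j))
          - κ * (∑ i, u i * μ i) - (1 / κ) * (∑ j, v j * ν j))
    (hactive_u : ∀ i ∈ I, ε / κ < Real.exp (usc i))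
    (hactive_v : ∀ j ∈ J, ε * κ < Real.exp (vsc j))
    (μsc : Fin n → ℝ)
    (hμsc : ∀ i, μsc i = ∑ j, Real.exp (usc i) * K i j * Real.exp (vsc j))
    (νmaxJ : ℝ)
    (hνmaxJ : (∃ j ∈ J, ν j = νmaxJ) ∧ ∀ j ∈ J, ν j ≤ νmaxJ) :
    (∀ i ∈ I, μsc i = κ * μ i) ∧
    (∑ i ∈ Iᶜ, μsc i = ∑ i ∈ Iᶜ, ε / κ * ∑ j, K i j * Real.exp (vsc j)) ∧
    ∑ i ∈ Iᶜ, μsc i ≤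
      ((n : ℝ) - I.card) *
        ((J.card : ℝ) * νmaxJ / ((n : ℝ) * κ * Kmin) + ((m : ℝ) - J.card) * ε ^ 2) := by
  have hKpos : ∀ i j, 0 < K i j := fun i j => by rw [hK]; exact Real.exp_pos _
  have hK1 : ∀ i j, K i j ≤ 1 := fun i j => by
    rw [hK]; apply Real.exp_le_one_iff.mpr; apply div_nonpos_of_nonpos_of_nonneg <;>
      [linarith [hC i j]; linarith]
  have hKminpos : 0 < Kmin := by obtain ⟨i, j, hij⟩ := hKmin_mem; rw [← hij]; exact hKpos i j
  have hεκ : 0 < ε / κ := by positivity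
  have hvpos : ∀ j, 0 < Real.exp (vsc j) := fun j => Real.exp_pos _
  set R : Fin n → ℝ := fun i => ∑ j, K i j * Real.exp (vsc j) with hR
  have hRpos : ∀ i, 0 < R i := fun i =>
    Finset.sum_pos (fun j _ => mul_pos (hKpos i j) (hvpos j)) ⟨⟨0, hm⟩, Finset.mem_univ _⟩
  have inner : ∀ (w : Fin n → ℝ) (i : Fin n),
      ∑ j, Real.exp (w i) * K i j * Real.exp (vsc j) = Real.exp (w i) * R i := by
    intro w i; rw [hR, Finset.mul_sum]; exact Finset.sum_congr rfl fun j _ => by ring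
  -- Part A: u-stationarity
  have partA : ∀ i ∈ I, Real.exp (usc i) * R i = κ * μ i := by
    intro i0 hi0
    have ha : 0 < Real.exp (usc i0) * R i0 := mul_pos (Real.exp_pos _) (hRpos i0)
    have hb : 0 < κ * μ i0 := mul_pos hκ (hμpos i0)
    have hδ : 0 < usc i0 - Real.log (ε / κ) := by
      have := (Real.log_lt_iff_lt_exp hεκ).mpr (hactive_u i0 hi0)
      linarith
    apply stationary_aux ha hb hδ
    intro t ht
    set u := Function.update usc i0 (usc i0 + t) with hu
    have h1 : ∀ i, ε / κ ≤ Real.exp (u i) := by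
      intro i
      by_cases hi : i = i0
      · subst hi
        rw [hu, Function.update_self]
        calc ε / κ = Real.exp (Real.log (ε / κ)) := (Real.exp_log hεκ).symm
          _ ≤ Real.exp (usc i + t) := Real.exp_le_exp.mpr (by linarith)
      · rw [hu, Function.update_of_ne hi]; exact husc_feas i
    have h3 : ∀ i ∉ I, u i = Real.log (ε / κ) := by
      intro i hi
      have hne : i ≠ i0 := fun h => hi (h ▸ hi0)
      rw [hu, Function.update_of_ne hne]; exact husc_out i hi
    have hmin := hsc_min u vsc h1 hvsc_feas h3 hvsc_out
    have d1 : ∑ i, ∑ j, Real.exp (u i) * K i j * Real.exp (vsc j) = ∑ i, Real.exp (u i) * R i :=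
      Finset.sum_congr rfl fun i _ => inner u i
    have d2 : ∑ i, ∑ j, Real.exp (usc i) * K i j * Real.exp (vsc j)
        = ∑ i, Real.exp (usc i) * R i := Finset.sum_congr rfl fun i _ => inner usc i
    rw [d1, d2] at hmin
    have e1 : ∑ i, Real.exp (u i) * R i - ∑ i, Real.exp (usc i) * R i
        = Real.exp (usc i0) * Real.exp t * R i0 - Real.exp (usc i0) * R i0 := by
      rw [← Finset.sum_sub_distrib, Finset.sum_eq_single i0]
      · rw [hu, Function.update_self, Real.exp_add]
      · intro i _ hi; rw [hu, Function.update_of_ne hi]; ring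
      · intro h; exact absurd (Finset.mem_univ i0) h
    have e2 : ∑ i, u i * μ i - ∑ i, usc i * μ i = t * μ i0 := by
      rw [← Finset.sum_sub_distrib, Finset.sum_eq_single i0]
      · rw [hu, Function.update_self]; ring
      · intro i _ hi; rw [hu, Function.update_of_ne hi]; ring
      · intro h; exact absurd (Finset.mem_univ i0) h
    nlinarith [hmin, e1, e2]

  -- Part B
  have partB : ∑ i ∈ Iᶜ, μsc i = ∑ i ∈ Iᶜ, ε / κ * R i := by
    apply Finset.sum_congr rfl
    intro i hi
    have hi' : i ∉ I := Finset.mem_compl.mp hi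
    rw [hμsc i, inner usc i, husc_out i hi', Real.exp_log hεκ]
  -- Part C : v-stationarity
  set Col : Fin m → ℝ := fun j => ∑ i, Real.exp (usc i) * K i j with hCol
  have hColpos : ∀ j, 0 < Col j := fun j =>
    Finset.sum_pos (fun i _ => mul_pos (Real.exp_pos _) (hKpos i j)) ⟨⟨0, hn⟩, Finset.mem_univ _⟩
  have inner2 : ∀ (w : Fin m → ℝ) (j : Fin m),
      ∑ i, Real.exp (usc i) * K i j * Real.exp (w j) = Col j * Real.exp (w j) :=
    fun w j => (Finset.sum_mul _ _ _).symm
  have hεκ2 : 0 < ε * κ := mul_pos hε hκ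
  have partC : ∀ j ∈ J, Col j * Real.exp (vsc j) = 1 / κ * ν j := by
    intro j0 hj0
    have ha : 0 < Col j0 * Real.exp (vsc j0) := mul_pos (hColpos j0) (Real.exp_pos _)
    have hb : 0 < 1 / κ * ν j0 := mul_pos (by positivity) (hνpos j0)
    have hδ : 0 < vsc j0 - Real.log (ε * κ) := by
      have := (Real.log_lt_iff_lt_exp hεκ2).mpr (hactive_v j0 hj0)
      linarith
    apply stationary_aux ha hb hδ
    intro t ht
    set v := Function.update vsc j0 (vsc j0 + t) with hv
    have h1 : ∀ j, ε * κ ≤ Real.exp (v j) := by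
      intro j
      by_cases hj : j = j0
      · subst hj
        rw [hv, Function.update_self]
        calc ε * κ = Real.exp (Real.log (ε * κ)) := (Real.exp_log hεκ2).symm
          _ ≤ Real.exp (vsc j + t) := Real.exp_le_exp.mpr (by linarith)
      · rw [hv, Function.update_of_ne hj]; exact hvsc_feas j
    have h3 : ∀ j ∉ J, v j = Real.log (ε * κ) := by
      intro j hj
      have hne : j ≠ j0 := fun h => hj (h ▸ hj0)
      rw [hv, Function.update_of_ne hne]; exact hvsc_out j hj
    have hmin := hsc_min usc v husc_feas h1 husc_out h3
    have d1 : ∑ i, ∑ j, Real.exp (usc i) * K i j * Real.exp (v j)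
        = ∑ j, Col j * Real.exp (v j) := by
      rw [Finset.sum_comm]; exact Finset.sum_congr rfl fun j _ => inner2 v j
    have d2 : ∑ i, ∑ j, Real.exp (usc i) * K i j * Real.exp (vsc j)
        = ∑ j, Col j * Real.exp (vsc j) := by
      rw [Finset.sum_comm]; exact Finset.sum_congr rfl fun j _ => inner2 vsc j
    rw [d1, d2] at hmin
    have e1 : ∑ j, Col j * Real.exp (v j) - ∑ j, Col j * Real.exp (vsc j)
        = Col j0 * (Real.exp (vsc j0) * Real.exp t) - Col j0 * Real.exp (vsc j0) := by
      rw [← Finset.sum_sub_distrib, Finset.sum_eq_single j0]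
      · rw [hv, Function.update_self, Real.exp_add]
      · intro j _ hj; rw [hv, Function.update_of_ne hj]; ring
      · intro h; exact absurd (Finset.mem_univ j0) h
    have e2 : ∑ j, v j * ν j - ∑ j, vsc j * ν j = t * ν j0 := by
      rw [← Finset.sum_sub_distrib, Finset.sum_eq_single j0]
      · rw [hv, Function.update_self]; ring
      · intro j _ hj; rw [hv, Function.update_of_ne hj]; ring
      · intro h; exact absurd (Finset.mem_univ j0) h
    have e2' : 1 / κ * (∑ j, v j * ν j) - 1 / κ * (∑ j, vsc j * ν j)
        = 1 / κ * (t * ν j0) := by rw [← mul_sub, e2]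
    nlinarith [hmin, e1, e2']
  -- bound for each i outside I
  have hκ0 : (κ : ℝ) ≠ 0 := ne_of_gt hκ
  have hn0 : (0 : ℝ) < (n : ℝ) := by exact_mod_cast hn
  have hvJ : ∀ j ∈ J, ε / κ * Real.exp (vsc j) ≤ ν j / ((n : ℝ) * κ * Kmin) := by
    intro j hj
    have hcol : (n : ℝ) * (ε / κ * Kmin) ≤ Col j := by
      have h5 : ∀ i ∈ (Finset.univ : Finset (Fin n)),
          ε / κ * Kmin ≤ Real.exp (usc i) * K i j := by
        intro i _
        have := husc_feas i
        have := hKmin_le i j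
        nlinarith [Real.exp_pos (usc i)]
      calc (n : ℝ) * (ε / κ * Kmin)
          = (Finset.univ : Finset (Fin n)).card • (ε / κ * Kmin) := by
            simp [nsmul_eq_mul]
        _ ≤ Col j := Finset.card_nsmul_le_sum _ _ _ h5
    have h6 : (n : ℝ) * (ε / κ * Kmin) * Real.exp (vsc j) ≤ 1 / κ * ν j := by
      calc (n : ℝ) * (ε / κ * Kmin) * Real.exp (vsc j)
          ≤ Col j * Real.exp (vsc j) :=
            mul_le_mul_of_nonneg_right hcol (Real.exp_pos _).le
        _ = 1 / κ * ν j := partC j hj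
    rw [le_div_iff₀ (by positivity)]
    have h7 : ε / κ * Real.exp (vsc j) * ((n : ℝ) * κ * Kmin)
        = ((n : ℝ) * (ε / κ * Kmin) * Real.exp (vsc j)) * κ := by ring
    have h8 : (1 / κ * ν j) * κ = ν j := by field_simp
    nlinarith [mul_le_mul_of_nonneg_right h6 hκ.le]
  have hterm : ∀ i, ∀ j, j ∈ J → ε / κ * (K i j * Real.exp (vsc j))
      ≤ νmaxJ / ((n : ℝ) * κ * Kmin) := by
    intro i j hj
    have h1 : ε / κ * (K i j * Real.exp (vsc j)) ≤ ε / κ * Real.exp (vsc j) := by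
      have h1a : K i j * Real.exp (vsc j) ≤ 1 * Real.exp (vsc j) :=
        mul_le_mul_of_nonneg_right (hK1 i j) (Real.exp_pos _).le
      calc ε / κ * (K i j * Real.exp (vsc j)) ≤ ε / κ * (1 * Real.exp (vsc j)) :=
            mul_le_mul_of_nonneg_left h1a hεκ.le
        _ = ε / κ * Real.exp (vsc j) := by ring
    have h2 := hvJ j hj
    have h3 : ν j / ((n : ℝ) * κ * Kmin) ≤ νmaxJ / ((n : ℝ) * κ * Kmin) :=
      (div_le_div_iff_of_pos_right (by positivity)).mpr (hνmaxJ.2 j hj)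
    linarith
  -- complement mass bound
  have hJc : ((Jᶜ.card : ℕ) : ℝ) = (m : ℝ) - J.card := by
    rw [Finset.card_compl, Fintype.card_fin, Nat.cast_sub (by simpa using Finset.card_le_univ J)]
  have hIc : ((Iᶜ.card : ℕ) : ℝ) = (n : ℝ) - I.card := by
    rw [Finset.card_compl, Fintype.card_fin, Nat.cast_sub (by simpa using Finset.card_le_univ I)]
  set B : ℝ := (J.card : ℝ) * νmaxJ / ((n : ℝ) * κ * Kmin) + ((m : ℝ) - J.card) * ε ^ 2 with hB
  have hpercore : ∀ i, ε / κ * R i ≤ B := by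
    intro i
    have hsplit : ε / κ * R i
        = (∑ j ∈ J, ε / κ * (K i j * Real.exp (vsc j)))
          + ∑ j ∈ Jᶜ, ε / κ * (K i j * Real.exp (vsc j)) := by
      rw [Finset.sum_add_sum_compl, hR, Finset.mul_sum]
    have hJsum : ∑ j ∈ J, ε / κ * (K i j * Real.exp (vsc j))
        ≤ (J.card : ℝ) * νmaxJ / ((n : ℝ) * κ * Kmin) := by
      calc ∑ j ∈ J, ε / κ * (K i j * Real.exp (vsc j))
          ≤ ∑ j ∈ J, νmaxJ / ((n : ℝ) * κ * Kmin) :=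
            Finset.sum_le_sum fun j hj => hterm i j hj
        _ = (J.card : ℝ) * (νmaxJ / ((n : ℝ) * κ * Kmin)) := by
            rw [Finset.sum_const, nsmul_eq_mul]
        _ = (J.card : ℝ) * νmaxJ / ((n : ℝ) * κ * Kmin) := by ring
    have hJcsum : ∑ j ∈ Jᶜ, ε / κ * (K i j * Real.exp (vsc j))
        ≤ ((m : ℝ) - J.card) * ε ^ 2 := by
      calc ∑ j ∈ Jᶜ, ε / κ * (K i j * Real.exp (vsc j))
          ≤ ∑ j ∈ Jᶜ, ε ^ 2 := by
            apply Finset.sum_le_sum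
            intro j hj
            have hj' : j ∉ J := Finset.mem_compl.mp hj
            rw [hvsc_out j hj', Real.exp_log hεκ2]
            have heq : ε / κ * (K i j * (ε * κ)) = ε ^ 2 * K i j := by
              field_simp
            rw [heq]
            nlinarith [hK1 i j, hKpos i j, sq_nonneg ε]
        _ = ((Jᶜ.card : ℕ) : ℝ) * ε ^ 2 := by rw [Finset.sum_const, nsmul_eq_mul]
        _ = ((m : ℝ) - J.card) * ε ^ 2 := by rw [hJc]
    rw [hsplit, hB]
    exact add_le_add hJsum hJcsum
  refine ⟨fun i hi => by rw [hμsc i, inner usc i]; exact partA i hi, partB, ?_⟩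
  calc ∑ i ∈ Iᶜ, μsc i = ∑ i ∈ Iᶜ, ε / κ * R i := partB
    _ ≤ ∑ i ∈ Iᶜ, B := Finset.sum_le_sum fun i _ => hpercore i
    _ = ((Iᶜ.card : ℕ) : ℝ) * B := by rw [Finset.sum_const, nsmul_eq_mul]
    _ = ((n : ℝ) - I.card) * B := by rw [hIc]
end

section
/- Lemma 2 (ℓ1 norm of the screened marginal ν^sc, explicit form): ‖ν^sc‖₁ ≤ (1/κ)·Σ_{j∈J} ν_j + (m − m_b)·( n_b·κ·(max_{i∈I} μ_i)/(m K_min) + (n − n_b)·ε² ), where ‖·‖₁ is the ℓ1 norm. -/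
open scoped Classical

private lemma stationary_aux' (A c t0 : ℝ) (ht0 : t0 < 0)
    (h : ∀ t, t0 ≤ t → A ≤ A * Real.exp t - c * t) : A = c := by
  have hloc : IsLocalMin (fun t => A * Real.exp t - c * t) 0 := by
    filter_upwards [Ici_mem_nhds ht0] with t ht
    simpa using h t ht
  have hd : HasDerivAt (fun t => A * Real.exp t - c * t) (A - c) 0 := by
    have := ((Real.hasDerivAt_exp 0).const_mul A).sub ((hasDerivAt_id 0).const_mul c)
    simp only [Real.exp_zero, mul_one] at this
    exact this
  have := hloc.hasDerivAt_eq_zero hd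
  linarith

theorem l1_norm_screened_marginal_nu
    (n m : ℕ) (hn : 0 < n) (hm : 0 < m)
    (C : Fin n → Fin m → ℝ) (hC : ∀ i j, 0 ≤ C i j)
    (η : ℝ) (hη : 0 < η)
    (K : Fin n → Fin m → ℝ) (hK : ∀ i j, K i j = Real.exp (-(C i j) / η))
    (μ : Fin n → ℝ) (ν : Fin m → ℝ)
    (hμpos : ∀ i, 0 < μ i) (hνpos : ∀ j, 0 < ν j)
    (hμsum : ∑ i, μ i = 1) (hνsum : ∑ j, ν j = 1)
    (ε κ : ℝ) (hε : 0 < ε) (hκ : 0 < κ)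
    (I : Finset (Fin n)) (hI : ∀ i, i ∈ I ↔ ε ^ 2 / κ * (∑ j, K i j) ≤ μ i)
    (J : Finset (Fin m)) (hJ : ∀ j, j ∈ J ↔ κ * ε ^ 2 * (∑ i, K i j) ≤ ν j)
    (hIne : I.Nonempty) (hJne : J.Nonempty)
    (Kmin : ℝ) (hKmin_le : ∀ i j, Kmin ≤ K i j) (hKmin_mem : ∃ i j, K i j = Kmin)
    (usc : Fin n → ℝ) (vsc : Fin m → ℝ)
    (husc_feas : ∀ i, ε / κ ≤ Real.exp (usc i))
    (hvsc_feas : ∀ j, ε * κ ≤ Real.exp (vsc j))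
    (husc_out : ∀ i ∉ I, usc i = Real.log (ε / κ))
    (hvsc_out : ∀ j ∉ J, vsc j = Real.log (ε * κ))
    (hsc_min : ∀ (u : Fin n → ℝ) (v : Fin m → ℝ),
      (∀ i, ε / κ ≤ Real.exp (u i)) → (∀ j, ε * κ ≤ Real.exp (v j)) →
      (∀ i ∉ I, u i = Real.log (ε / κ)) → (∀ j ∉ J, v j = Real.log (ε * κ)) →
      (∑ i, ∑ j, Real.exp (usc i) * K i j * Real.exp (vsc j))
          - κ * (∑ i, usc i * μ i) - (1 / κ) * (∑ j, vsc j * ν j)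
        ≤ (∑ i, ∑ j, Real.exp (u i) * K i j * Real.exp (v j))
          - κ * (∑ i, u i * μ i) - (1 / κ) * (∑ j, v j * ν j))
    (hactive_u : ∀ i ∈ I, ε / κ < Real.exp (usc i))
    (hactive_v : ∀ j ∈ J, ε * κ < Real.exp (vsc j))
    (νsc : Fin m → ℝ)
    (hνsc : ∀ j, νsc j = ∑ i, Real.exp (usc i) * K i j * Real.exp (vsc j))
    (μmaxI : ℝ)
    (hμmaxI : (∃ i ∈ I, μ i = μmaxI) ∧ ∀ i ∈ I, μ i ≤ μmaxI) :
    ∑ j, |νsc j| ≤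
      (1 / κ) * (∑ j ∈ J, ν j) +
        ((m : ℝ) - J.card) *
          ((I.card : ℝ) * κ * μmaxI / ((m : ℝ) * Kmin) + ((n : ℝ) - I.card) * ε ^ 2) := by
  haveI : Nonempty (Fin n) := Fin.pos_iff_nonempty.mp hn
  have hεκ : 0 < ε * κ := mul_pos hε hκ
  have hεκ' : 0 < ε / κ := div_pos hε hκ
  have hKpos : ∀ i j, 0 < K i j := fun i j => by rw [hK]; exact Real.exp_pos _
  have hKle1 : ∀ i j, K i j ≤ 1 := by
    intro i j
    rw [hK]
    have : -(C i j) / η ≤ 0 := div_nonpos_of_nonpos_of_nonneg (neg_nonpos_of_nonneg (hC i j)) hη.le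
    simpa using Real.exp_le_exp.mpr (le_trans this le_rfl)
  have hKminpos : 0 < Kmin := by
    obtain ⟨i, j, hij⟩ := hKmin_mem
    exact hij ▸ hKpos i j
  have hBpos : ∀ i j, 0 < Real.exp (usc i) * K i j * Real.exp (vsc j) := fun i j =>
    mul_pos (mul_pos (Real.exp_pos _) (hKpos i j)) (Real.exp_pos _)
  -- column stationarity: for j ∈ J, νsc j = ν j / κ
  have hcol : ∀ j ∈ J, νsc j = ν j / κ := by
    intro j hj
    have hvj : Real.log (ε * κ) < vsc j := by
      have h1 : Real.log (ε * κ) < Real.log (Real.exp (vsc j)) :=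
        Real.log_lt_log hεκ (hactive_v j hj)
      rwa [Real.log_exp] at h1
    refine stationary_aux' (νsc j) (ν j / κ) (Real.log (ε * κ) - vsc j) (by linarith) ?_
    intro t ht
    set v' : Fin m → ℝ := fun j' => if j' = j then vsc j + t else vsc j' with hv'
    have h2 : ∀ j', ε * κ ≤ Real.exp (v' j') := by
      intro j'
      by_cases hc : j' = j
      · simp only [hv', hc, if_pos rfl]
        calc ε * κ = Real.exp (Real.log (ε * κ)) := (Real.exp_log hεκ).symm
          _ ≤ Real.exp (vsc j + t) := Real.exp_le_exp.mpr (by linarith)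
      · simp only [hv', if_neg hc]; exact hvsc_feas j'
    have h4 : ∀ j' ∉ J, v' j' = Real.log (ε * κ) := by
      intro j' hj'
      have hne : j' ≠ j := fun h => hj' (h ▸ hj)
      simp only [hv', if_neg hne]; exact hvsc_out j' hj'
    have hmin := hsc_min usc v' husc_feas h2 husc_out h4
    have hsum1 : (∑ i, ∑ j', Real.exp (usc i) * K i j' * Real.exp (v' j'))
        = (∑ i, ∑ j', Real.exp (usc i) * K i j' * Real.exp (vsc j'))
          + νsc j * (Real.exp t - 1) := by
      rw [hνsc j, Finset.sum_mul, ← Finset.sum_add_distrib]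
      refine Finset.sum_congr rfl fun i _ => ?_
      have hterm : ∀ j', Real.exp (usc i) * K i j' * Real.exp (v' j')
          = Real.exp (usc i) * K i j' * Real.exp (vsc j')
            + (if j' = j then Real.exp (usc i) * K i j * Real.exp (vsc j) * (Real.exp t - 1) else 0) := by
        intro j'
        by_cases hc : j' = j
        · subst hc; simp only [hv', eq_self_iff_true, if_true, Real.exp_add]; ring
        · simp only [hv', if_neg hc, add_zero]
      rw [Finset.sum_congr rfl fun j' _ => hterm j', Finset.sum_add_distrib,
        Finset.sum_ite_eq' Finset.univ j]
      simp
    have hsum2 : (∑ j', v' j' * ν j') = (∑ j', vsc j' * ν j') + t * ν j := by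
      have hterm : ∀ j', v' j' * ν j'
          = vsc j' * ν j' + (if j' = j then t * ν j else 0) := by
        intro j'
        by_cases hc : j' = j
        · subst hc; simp only [hv', eq_self_iff_true, if_true]; ring
        · simp only [hv', if_neg hc, add_zero]
      rw [Finset.sum_congr rfl fun j' _ => hterm j', Finset.sum_add_distrib,
        Finset.sum_ite_eq' Finset.univ j]
      simp
    rw [hsum1, hsum2] at hmin
    have hκ' : (1 : ℝ) / κ * (t * ν j) = ν j / κ * t := by field_simp
    nlinarith [hmin]
  -- row stationarity: for i ∈ I, row sum = κ * μ i
  have hrow : ∀ i ∈ I, (∑ j, Real.exp (usc i) * K i j * Real.exp (vsc j)) = κ * μ i := by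
    intro i hi
    have hui : Real.log (ε / κ) < usc i := by
      have h1 : Real.log (ε / κ) < Real.log (Real.exp (usc i)) :=
        Real.log_lt_log hεκ' (hactive_u i hi)
      rwa [Real.log_exp] at h1
    refine stationary_aux' _ (κ * μ i) (Real.log (ε / κ) - usc i) (by linarith) ?_
    intro t ht
    set u' : Fin n → ℝ := fun i' => if i' = i then usc i + t else usc i' with hu'
    have h1 : ∀ i', ε / κ ≤ Real.exp (u' i') := by
      intro i'
      by_cases hc : i' = i
      · simp only [hu', hc, if_pos rfl]
        calc ε / κ = Real.exp (Real.log (ε / κ)) := (Real.exp_log hεκ').symm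
          _ ≤ Real.exp (usc i + t) := Real.exp_le_exp.mpr (by linarith)
      · simp only [hu', if_neg hc]; exact husc_feas i'
    have h3 : ∀ i' ∉ I, u' i' = Real.log (ε / κ) := by
      intro i' hi'
      have hne : i' ≠ i := fun h => hi' (h ▸ hi)
      simp only [hu', if_neg hne]; exact husc_out i' hi'
    have hmin := hsc_min u' vsc h1 hvsc_feas h3 hvsc_out
    have hsum1 : (∑ i', ∑ j, Real.exp (u' i') * K i' j * Real.exp (vsc j))
        = (∑ i', ∑ j, Real.exp (usc i') * K i' j * Real.exp (vsc j))
          + (∑ j, Real.exp (usc i) * K i j * Real.exp (vsc j)) * (Real.exp t - 1) := by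
      have hterm : ∀ i', (∑ j, Real.exp (u' i') * K i' j * Real.exp (vsc j))
          = (∑ j, Real.exp (usc i') * K i' j * Real.exp (vsc j))
            + (if i' = i then (∑ j, Real.exp (usc i) * K i j * Real.exp (vsc j)) * (Real.exp t - 1) else 0) := by
        intro i'
        by_cases hc : i' = i
        · subst hc
          simp only [hu', eq_self_iff_true, if_true, Real.exp_add]
          rw [Finset.sum_mul, ← Finset.sum_add_distrib]
          exact Finset.sum_congr rfl fun j _ => by ring
        · simp only [hu', if_neg hc, add_zero]
      rw [Finset.sum_congr rfl fun i' _ => hterm i', Finset.sum_add_distrib,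
        Finset.sum_ite_eq' Finset.univ i]
      simp
    have hsum2 : (∑ i', u' i' * μ i') = (∑ i', usc i' * μ i') + t * μ i := by
      have hterm : ∀ i', u' i' * μ i'
          = usc i' * μ i' + (if i' = i then t * μ i else 0) := by
        intro i'
        by_cases hc : i' = i
        · subst hc; simp only [hu', eq_self_iff_true, if_true]; ring
        · simp only [hu', if_neg hc, add_zero]
      rw [Finset.sum_congr rfl fun i' _ => hterm i', Finset.sum_add_distrib,
        Finset.sum_ite_eq' Finset.univ i]
      simp
    rw [hsum1, hsum2] at hmin
    nlinarith [hmin]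
  -- bound on exp(usc i) for i ∈ I
  have hubound : ∀ i ∈ I, Real.exp (usc i) ≤ μ i / (ε * (m : ℝ) * Kmin) := by
    intro i hi
    have hlow : (m : ℝ) * (Real.exp (usc i) * Kmin * (ε * κ))
        ≤ ∑ j, Real.exp (usc i) * K i j * Real.exp (vsc j) := by
      calc (m : ℝ) * (Real.exp (usc i) * Kmin * (ε * κ))
          = ∑ _j : Fin m, Real.exp (usc i) * Kmin * (ε * κ) := by
            rw [Finset.sum_const, Finset.card_univ, Fintype.card_fin, nsmul_eq_mul]
        _ ≤ ∑ j, Real.exp (usc i) * K i j * Real.exp (vsc j) := by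
            refine Finset.sum_le_sum fun j _ => ?_
            have h1 : Real.exp (usc i) * Kmin ≤ Real.exp (usc i) * K i j :=
              mul_le_mul_of_nonneg_left (hKmin_le i j) (Real.exp_pos _).le
            have h2 : 0 ≤ Real.exp (usc i) * Kmin :=
              mul_nonneg (Real.exp_pos _).le hKminpos.le
            calc Real.exp (usc i) * Kmin * (ε * κ)
                ≤ Real.exp (usc i) * K i j * (ε * κ) :=
                  mul_le_mul_of_nonneg_right h1 hεκ.le
              _ ≤ Real.exp (usc i) * K i j * Real.exp (vsc j) := by
                  refine mul_le_mul_of_nonneg_left (hvsc_feas j) ?_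
                  exact mul_nonneg (Real.exp_pos _).le (hKpos i j).le
    rw [hrow i hi] at hlow
    have hmpos : (0 : ℝ) < (m : ℝ) := by exact_mod_cast hm
    have hden : 0 < ε * (m : ℝ) * Kmin := by positivity
    rw [le_div_iff₀ hden]
    nlinarith [hlow]
  -- value of exp(usc i) for i ∉ I and exp(vsc j) for j ∉ J
  have huout : ∀ i ∉ I, Real.exp (usc i) = ε / κ := fun i hi => by
    rw [husc_out i hi, Real.exp_log hεκ']
  have hvout : ∀ j ∉ J, Real.exp (vsc j) = ε * κ := fun j hj => by
    rw [hvsc_out j hj, Real.exp_log hεκ]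
  have hmpos : (0 : ℝ) < (m : ℝ) := by exact_mod_cast hm
  have hμmaxpos : 0 < μmaxI := by
    obtain ⟨⟨i, hi, hie⟩, _⟩ := hμmaxI
    exact hie ▸ hμpos i
  -- bound for νsc j when j ∉ J
  have hout : ∀ j ∉ J, νsc j ≤
      (I.card : ℝ) * κ * μmaxI / ((m : ℝ) * Kmin) + ((n : ℝ) - I.card) * ε ^ 2 := by
    intro j hj
    rw [hνsc j, ← Finset.sum_sdiff (Finset.subset_univ I)]
    have hIb : (∑ i ∈ I, Real.exp (usc i) * K i j * Real.exp (vsc j))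
        ≤ (I.card : ℝ) * κ * μmaxI / ((m : ℝ) * Kmin) := by
      have hterm : ∀ i ∈ I, Real.exp (usc i) * K i j * Real.exp (vsc j)
          ≤ κ * μmaxI / ((m : ℝ) * Kmin) := by
        intro i hi
        rw [hvout j hj]
        have h1 : Real.exp (usc i) * K i j ≤ μ i / (ε * (m : ℝ) * Kmin) := by
          calc Real.exp (usc i) * K i j ≤ Real.exp (usc i) * 1 :=
                mul_le_mul_of_nonneg_left (hKle1 i j) (Real.exp_pos _).le
            _ = Real.exp (usc i) := mul_one _
            _ ≤ μ i / (ε * (m : ℝ) * Kmin) := hubound i hi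
        have h2 : Real.exp (usc i) * K i j * (ε * κ) ≤ μ i / (ε * (m : ℝ) * Kmin) * (ε * κ) :=
          mul_le_mul_of_nonneg_right h1 hεκ.le
        have h3 : μ i / (ε * (m : ℝ) * Kmin) * (ε * κ) = κ * μ i / ((m : ℝ) * Kmin) := by
          field_simp
        have h4 : κ * μ i / ((m : ℝ) * Kmin) ≤ κ * μmaxI / ((m : ℝ) * Kmin) := by
          have hmem := hμmaxI.2 i hi
          gcongr
        rw [h3] at h2
        linarith
      calc (∑ i ∈ I, Real.exp (usc i) * K i j * Real.exp (vsc j))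
          ≤ ∑ _i ∈ I, κ * μmaxI / ((m : ℝ) * Kmin) := Finset.sum_le_sum hterm
        _ = (I.card : ℝ) * (κ * μmaxI / ((m : ℝ) * Kmin)) := by
            rw [Finset.sum_const, nsmul_eq_mul]
        _ = (I.card : ℝ) * κ * μmaxI / ((m : ℝ) * Kmin) := by ring
    have hIcb : (∑ i ∈ Finset.univ \ I, Real.exp (usc i) * K i j * Real.exp (vsc j))
        ≤ ((n : ℝ) - I.card) * ε ^ 2 := by
      have hterm : ∀ i ∈ Finset.univ \ I, Real.exp (usc i) * K i j * Real.exp (vsc j) ≤ ε ^ 2 := by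
        intro i hi
        rw [huout i (Finset.mem_sdiff.mp hi).2, hvout j hj]
        have : ε / κ * K i j * (ε * κ) = ε ^ 2 * K i j := by field_simp
        rw [this]
        calc ε ^ 2 * K i j ≤ ε ^ 2 * 1 :=
              mul_le_mul_of_nonneg_left (hKle1 i j) (by positivity)
          _ = ε ^ 2 := mul_one _
      calc (∑ i ∈ Finset.univ \ I, Real.exp (usc i) * K i j * Real.exp (vsc j))
          ≤ ∑ _i ∈ Finset.univ \ I, ε ^ 2 := Finset.sum_le_sum hterm
        _ = ((Finset.univ \ I).card : ℝ) * ε ^ 2 := by rw [Finset.sum_const, nsmul_eq_mul]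
        _ = ((n : ℝ) - I.card) * ε ^ 2 := by
            congr 1
            rw [Finset.card_sdiff_of_subset (Finset.subset_univ I), Finset.card_univ, Fintype.card_fin,
              Nat.cast_sub (by simpa [Finset.card_univ] using I.card_le_univ)]
    linarith
  -- final computation
  have hνsc_pos : ∀ j, 0 < νsc j := fun j => by
    rw [hνsc j]
    exact Finset.sum_pos (fun i _ => hBpos i j) (Finset.univ_nonempty)
  have habs : (∑ j, |νsc j|) = ∑ j, νsc j :=
    Finset.sum_congr rfl fun j _ => abs_of_pos (hνsc_pos j)
  rw [habs, ← Finset.sum_sdiff (Finset.subset_univ J)]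
  have hJsum : (∑ j ∈ J, νsc j) = (1 / κ) * ∑ j ∈ J, ν j := by
    rw [Finset.mul_sum]
    refine Finset.sum_congr rfl fun j hj => ?_
    rw [hcol j hj]; ring
  have hJc : (∑ j ∈ Finset.univ \ J, νsc j)
      ≤ ((m : ℝ) - J.card) *
        ((I.card : ℝ) * κ * μmaxI / ((m : ℝ) * Kmin) + ((n : ℝ) - I.card) * ε ^ 2) := by
    calc (∑ j ∈ Finset.univ \ J, νsc j)
        ≤ ∑ _j ∈ Finset.univ \ J,
            ((I.card : ℝ) * κ * μmaxI / ((m : ℝ) * Kmin) + ((n : ℝ) - I.card) * ε ^ 2) :=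
          Finset.sum_le_sum fun j hj => hout j (Finset.mem_sdiff.mp hj).2
      _ = ((Finset.univ \ J).card : ℝ) *
            ((I.card : ℝ) * κ * μmaxI / ((m : ℝ) * Kmin) + ((n : ℝ) - I.card) * ε ^ 2) := by
          rw [Finset.sum_const, nsmul_eq_mul]
      _ = ((m : ℝ) - J.card) * _ := by
          congr 1
          rw [Finset.card_sdiff_of_subset (Finset.subset_univ J), Finset.card_univ, Fintype.card_fin,
            Nat.cast_sub (by simpa [Finset.card_univ] using J.card_le_univ)]
  rw [hJsum]
  linarith
end
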